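/- arXiv:1201.2501 — 3 statements merged into one kernel-verified Lean document; each statement's English description precedes it below -/
import Mathlib

section
/- If j ≢ 0 (mod n), n is a power of two, C ≥ 1, and σ is a uniformly random odd number in [n], then Pr[σj mod n ∈ [-C, C]] ≤ 4C/n. -/
open Finset

private lemma two_mul_card_odd_filter (m : ℕ) (hm : m ≠ 0) :
    2 * (Finset.univ.filter (fun σ : ZMod (2^m) => Odd σ.val)).card = 2^m := by
  haveI : NeZero (2^m) := ⟨by positivity⟩
  haveI : Fact (1 < 2^m) := ⟨by
    calc 1 < 2 := one_lt_two
    _ ≤ 2^m := Nat.le_self_pow hm 2⟩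
  have hpar : ∀ σ : ZMod (2^m), (σ + 1).val % 2 = (σ.val + 1) % 2 := by
    intro σ
    rw [ZMod.val_add, ZMod.val_one]
    exact Nat.mod_mod_of_dvd _ (dvd_pow_self 2 hm)
  have hb : (Finset.univ.filter (fun σ : ZMod (2^m) => Odd σ.val)).card
      = (Finset.univ.filter (fun σ : ZMod (2^m) => ¬ Odd σ.val)).card := by
    apply Finset.card_bij (fun σ _ => σ + 1)
    · intro σ hσ
      simp only [mem_filter, mem_univ, true_and, Nat.odd_iff] at hσ ⊢
      have := hpar σ
      omega
    · intro a _ b _ h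
      exact add_right_cancel h
    · intro τ hτ
      refine ⟨τ - 1, ?_, by ring⟩
      simp only [mem_filter, mem_univ, true_and, Nat.odd_iff] at hτ ⊢
      have := hpar (τ - 1)
      rw [sub_add_cancel] at this
      omega
  have hcard := Finset.card_filter_add_card_filter_not
    (s := (Finset.univ : Finset (ZMod (2^m)))) (p := fun σ => Odd σ.val)
  rw [Finset.card_univ, ZMod.card] at hcard
  omega

private lemma numer_card_le (m : ℕ) (hm : m ≠ 0) (j : ZMod (2^m)) (hj : j ≠ 0) (C : ℕ) :
    (Finset.univ.filter (fun σ : ZMod (2^m) =>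
        Odd σ.val ∧ |(σ * j).valMinAbs| ≤ (C : ℤ))).card ≤ 2 * C := by
  haveI : NeZero (2^m) := ⟨by positivity⟩
  have hjv : j.val ≠ 0 := by simpa [ZMod.val_eq_zero] using hj
  set k := j.val.factorization 2 with hkdef
  set w := j.val / 2^k with hwdef
  have hjw : 2^k * w = j.val := Nat.ordProj_mul_ordCompl_eq_self j.val 2
  have hw2 : ¬ (2 ∣ w) := Nat.not_dvd_ordCompl Nat.prime_two hjv
  have hwodd : Odd w := Nat.odd_iff.2 (by omega)
  have hkm : k < m := by
    have h1 : 2^k ≤ j.val := Nat.le_of_dvd (Nat.pos_of_ne_zero hjv) (Nat.ordProj_dvd _ 2)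
    have h2 : j.val < 2^m := ZMod.val_lt j
    exact (Nat.pow_lt_pow_iff_right one_lt_two).1 (lt_of_le_of_lt h1 h2)
  have hu : IsUnit ((w : ZMod (2^m))) :=
    (ZMod.isUnit_iff_coprime w (2^m)).2 (Nat.Coprime.pow_right m (Nat.coprime_two_right.2 hwodd))
  have hcast : ∀ σ : ZMod (2^m), ((σ.val : ℕ) : ZMod (2^m)) = σ := by
    intro σ; rw [ZMod.natCast_val, ZMod.cast_id]
  have hjeq : j = ((2^k : ℕ) : ZMod (2^m)) * (w : ZMod (2^m)) := by
    rw [← Nat.cast_mul, hjw, hcast j]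
  set S := Finset.univ.filter (fun σ : ZMod (2^m) =>
      Odd σ.val ∧ |(σ * j).valMinAbs| ≤ (C : ℤ)) with hSdef
  set f : ZMod (2^m) → ℤ := fun σ => (σ * j).valMinAbs with hfdef
  set q := C / 2^k with hqdef
  set B : Finset ℤ := ((Finset.Icc (-(q:ℤ)) q).erase 0).image (fun t => 2^k * t) with hBdef
  -- every element of S maps into B
  have hmaps : ∀ σ ∈ S, f σ ∈ B := by
    intro σ hσ
    simp only [hSdef, mem_filter, mem_univ, true_and] at hσ
    obtain ⟨hodd, habs⟩ := hσ
    have hσu : IsUnit σ := by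
      rw [← hcast σ]
      exact (ZMod.isUnit_iff_coprime σ.val (2^m)).2
        (Nat.Coprime.pow_right m (Nat.coprime_two_right.2 hodd))
    have hne : σ * j ≠ 0 := fun h => hj ((hσu.mul_right_eq_zero).1 h)
    have hv0 : f σ ≠ 0 := fun h => hne ((ZMod.valMinAbs_eq_zero _).1 h)
    -- divisibility of f σ by 2^k
    have hdvd : (2^k : ℤ) ∣ f σ := by
      set y := σ * (w : ZMod (2^m)) with hydef
      have h1 : ((f σ - (2^k * y.val : ℕ) : ℤ) : ZMod (2^m)) = 0 := by
        simp only [hfdef]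
        push_cast
        rw [sub_eq_zero, hcast y, hydef, hjeq]
        push_cast
        ring
      have h2 : ((2^m : ℕ) : ℤ) ∣ (f σ - (2^k * y.val : ℕ) : ℤ) :=
        (ZMod.intCast_zmod_eq_zero_iff_dvd _ _).1 h1
      have h3 : (2^k : ℤ) ∣ ((2^m : ℕ) : ℤ) := by
        push_cast
        exact pow_dvd_pow 2 hkm.le
      have h4 : (2^k : ℤ) ∣ (f σ - (2^k * y.val : ℕ) : ℤ) := h3.trans h2
      have h5 : (2^k : ℤ) ∣ ((2^k * y.val : ℕ) : ℤ) := by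
        push_cast; exact Dvd.intro _ rfl
      have := dvd_add h4 h5
      simpa using this
    set t := f σ / 2^k with htdef
    have hft : f σ = 2^k * t := (Int.mul_ediv_cancel' hdvd).symm
    have hkpos : (0:ℤ) < 2^k := by positivity
    have ht0 : t ≠ 0 := by
      intro h; rw [h, mul_zero] at hft; exact hv0 hft
    have htq : |t| ≤ (q : ℤ) := by
      have habs' : 2^k * |t| ≤ (C:ℤ) := by
        rw [← abs_of_pos hkpos, ← abs_mul, ← hft]; exact habs
      by_contra hlt
      push_neg at hlt
      have hub : C < (q+1) * 2^k :=
        (Nat.div_lt_iff_lt_mul (by positivity : 0 < 2^k)).1 (Nat.lt_succ_self q)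
      have h1 : ((q:ℤ)+1) * 2^k ≤ |t| * 2^k :=
        mul_le_mul_of_nonneg_right (by omega) hkpos.le
      have h2 : (C:ℤ) < ((q:ℤ)+1) * 2^k := by exact_mod_cast hub
      linarith [habs', h1, h2]
    simp only [hBdef, mem_image]
    refine ⟨t, ?_, hft.symm⟩
    rw [mem_erase, mem_Icc]
    exact ⟨ht0, by rw [← abs_le]; exact htq⟩
  -- each fiber has at most 2^k elements
  have hfib : ∀ v ∈ B, (S.filter (fun σ => f σ = v)).card ≤ 2^k := by
    intro v _
    have hdpos : 0 < 2^(m-k) := by positivity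
    have hsplit : (2:ℕ)^m = 2^(m-k) * 2^k := by
      rw [← pow_add, Nat.sub_add_cancel hkm.le]
    have hinj : (S.filter (fun σ => f σ = v)).card ≤ (Finset.range (2^k)).card := by
      apply Finset.card_le_card_of_injOn (fun σ : ZMod (2^m) => σ.val / 2^(m-k))
      · intro σ _
        simp only [coe_range, Set.mem_Iio]
        rw [Nat.div_lt_iff_lt_mul hdpos]
        calc σ.val < 2^m := ZMod.val_lt σ
          _ = 2^k * 2^(m-k) := by rw [hsplit, mul_comm]
      intro σ₁ h₁ σ₂ h₂ hq12
      simp only [coe_filter, Set.mem_setOf_eq] at h₁ h₂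
      have hmul : σ₁ * j = σ₂ * j := by
        have e : ((f σ₁ : ℤ) : ZMod (2^m)) = ((f σ₂ : ℤ) : ZMod (2^m)) := by
          rw [h₁.2, h₂.2]
        simpa only [hfdef, ZMod.coe_valMinAbs] using e
      have hc : σ₁ * ((2^k : ℕ) : ZMod (2^m)) = σ₂ * ((2^k : ℕ) : ZMod (2^m)) := by
        rw [hjeq] at hmul
        apply hu.mul_right_cancel
        rw [mul_assoc, mul_assoc]
        exact hmul
      have hz : ((((σ₁.val : ℤ) - σ₂.val) * 2^k : ℤ) : ZMod (2^m)) = 0 := by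
        push_cast
        rw [hcast σ₁, hcast σ₂, sub_mul, sub_eq_zero]
        push_cast at hc
        exact hc
      have hdvd2 : ((2^m : ℕ) : ℤ) ∣ ((σ₁.val : ℤ) - σ₂.val) * 2^k :=
        (ZMod.intCast_zmod_eq_zero_iff_dvd _ _).1 hz
      have hdvd3 : ((2^(m-k) : ℕ) : ℤ) ∣ ((σ₁.val : ℤ) - σ₂.val) := by
        have h2k : ((2:ℤ)^k) ≠ 0 := by positivity
        rw [← mul_dvd_mul_iff_right h2k]
        have : ((2^m : ℕ) : ℤ) = ((2^(m-k):ℕ):ℤ) * 2^k := by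
          push_cast; rw [← pow_add, Nat.sub_add_cancel hkm.le]
        rwa [← this]
      -- equal mods
      have hmod : σ₁.val % 2^(m-k) = σ₂.val % 2^(m-k) := by
        have hZ : (σ₁.val : ℤ) % ((2^(m-k) : ℕ) : ℤ) = (σ₂.val : ℤ) % ((2^(m-k) : ℕ) : ℤ) :=
          Int.ModEq.symm (Int.modEq_iff_dvd.2 (by simpa using hdvd3))
        have h1 : ((σ₁.val % 2^(m-k) : ℕ) : ℤ) = ((σ₂.val % 2^(m-k) : ℕ) : ℤ) := by
          push_cast at hZ ⊢
          exact hZ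
        exact_mod_cast h1
      have hq' : σ₁.val / 2^(m-k) = σ₂.val / 2^(m-k) := hq12
      have hv : σ₁.val = σ₂.val := by
        calc σ₁.val = 2^(m-k) * (σ₁.val / 2^(m-k)) + σ₁.val % 2^(m-k) :=
              (Nat.div_add_mod _ _).symm
          _ = 2^(m-k) * (σ₂.val / 2^(m-k)) + σ₂.val % 2^(m-k) := by rw [hq', hmod]
          _ = σ₂.val := Nat.div_add_mod _ _
      exact ZMod.val_injective _ hv
    simpa using hinj
  have step1 : S.card ≤ 2^k * B.card :=
    Finset.card_le_mul_card_image_of_maps_to hmaps _ hfib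
  have hBcard : B.card ≤ 2 * q := by
    calc B.card ≤ ((Finset.Icc (-(q:ℤ)) q).erase 0).card := Finset.card_image_le
      _ = ((Finset.Icc (-(q:ℤ)) q)).card - 1 := by
          rw [Finset.card_erase_of_mem (by rw [mem_Icc]; constructor <;> simp)]
      _ = 2 * q := by
          rw [Int.card_Icc]
          omega
  calc S.card ≤ 2^k * (2 * q) := step1.trans (Nat.mul_le_mul_left _ hBcard)
    _ = 2 * (2^k * q) := by ring
    _ ≤ 2 * C := by
        have : 2^k * q ≤ C := by
          rw [hqdef, mul_comm]
          exact Nat.div_mul_le_self C (2^k)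
        omega

/-- for nonzero j and uniformly random odd σ in ZMod n (n a power of 2),
the probability that σ·j has a representative in [-C, C] is at most 4C/n. -/
theorem odd_dilate_small (n : ℕ) [NeZero n] (hn : ∃ m : ℕ, n = 2 ^ m)
    (j : ZMod n) (hj : j ≠ 0) (C : ℕ) (hC : 1 ≤ C) :
    ((Finset.univ.filter (fun σ : ZMod n =>
        Odd σ.val ∧ |(σ * j).valMinAbs| ≤ (C : ℤ))).card : ℝ) /
      ((Finset.univ.filter (fun σ : ZMod n => Odd σ.val)).card : ℝ)
    ≤ 4 * C / n := by
  obtain ⟨m, rfl⟩ := hn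
  have hm : m ≠ 0 := by
    rintro rfl
    haveI : Subsingleton (ZMod (2^0)) := inferInstanceAs (Subsingleton (ZMod 1))
    exact hj (Subsingleton.elim j 0)
  have hD := two_mul_card_odd_filter m hm
  have hN := numer_card_le m hm j hj C
  set D := (Finset.univ.filter (fun σ : ZMod (2^m) => Odd σ.val)).card with hDdef
  set N := (Finset.univ.filter (fun σ : ZMod (2^m) =>
      Odd σ.val ∧ |(σ * j).valMinAbs| ≤ (C : ℤ))).card with hNdef
  have hDpos : 0 < D := by
    have : 0 < 2^m := by positivity
    omega
  have hDR : (0:ℝ) < (D:ℝ) := by exact_mod_cast hDpos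
  have hnR : (0:ℝ) < ((2^m : ℕ) : ℝ) := by positivity
  rw [div_le_div_iff₀ hDR hnR]
  have hDR2 : (2:ℝ) * D = ((2^m : ℕ) : ℝ) := by exact_mod_cast hD
  have hNR : (N:ℝ) ≤ 2 * C := by exact_mod_cast hN
  have hCpos : (0:ℝ) ≤ (C:ℝ) := by positivity
  nlinarith [hDR, hNR, hDR2]
end

section
/- Let T ⊂ [m] be a set of t consecutive integers and β uniform over T. Then for any integer i ∈ [n] with i ≥ 1 and any set S ⊂ [n] of l consecutive integers (mod n), Pr[βi mod n ∈ S] ≤ ⌈im/n⌉(1 + ⌊l/i⌋)/t. -/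
open Finset

private lemma ediv_sub_ediv_le' (a b i : ℤ) (hi : 0 < i) :
    a / i - b / i ≤ (a - b + i - 1) / i := by
  rw [Int.le_ediv_iff_mul_le hi]
  have h1 := Int.mul_ediv_add_emod a i
  have h2 := Int.mul_ediv_add_emod b i
  have h3 := Int.emod_nonneg a (ne_of_gt hi)
  have h4 := Int.emod_lt_of_pos b hi
  nlinarith

private lemma ediv_add_ediv_le' (a b i : ℤ) (hi : 0 < i) :
    a / i + b / i ≤ (a + b) / i := by
  rw [Int.le_ediv_iff_mul_le hi]
  have h1 := Int.mul_ediv_add_emod a i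
  have h2 := Int.mul_ediv_add_emod b i
  have h3 := Int.emod_nonneg a (ne_of_gt hi)
  have h4 := Int.emod_nonneg b (ne_of_gt hi)
  nlinarith

private lemma count_between (i A B : ℤ) (hi : 0 < i) (P : Finset ℤ)
    (hP : ∀ β ∈ P, A ≤ β * i ∧ β * i < B) (hne : P.Nonempty) :
    (P.card : ℤ) ≤ (B - A - 1) / i + 1 := by
  have hsub : P ⊆ Finset.Icc ((A + i - 1) / i) ((B - 1) / i) := by
    intro β hβ
    obtain ⟨h1, h2⟩ := hP β hβ
    rw [Finset.mem_Icc]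
    constructor
    · have h := Int.ediv_le_ediv hi (show A + i - 1 ≤ i - 1 + β * i by linarith)
      have hz : (i - 1) / i = 0 := Int.ediv_eq_zero_of_lt (by linarith) (by linarith)
      rwa [Int.add_mul_ediv_right _ _ (ne_of_gt hi), hz, zero_add] at h
    · have h := Int.ediv_le_ediv hi (show β * i ≤ B - 1 by linarith)
      rwa [Int.mul_ediv_cancel _ (ne_of_gt hi)] at h
  have hcard := Finset.card_le_card hsub
  rw [Int.card_Icc] at hcard
  obtain ⟨x, hx⟩ := hne
  have hxm := hsub hx
  rw [Finset.mem_Icc] at hxm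
  have hge : (A + i - 1) / i ≤ (B - 1) / i := le_trans hxm.1 hxm.2
  have h2 : (((B - 1) / i + 1 - (A + i - 1) / i).toNat : ℤ)
      = (B - 1) / i + 1 - (A + i - 1) / i := Int.toNat_of_nonneg (by omega)
  have h3 := ediv_sub_ediv_le' (B - 1) (A + i - 1) i hi
  have heq : B - 1 - (A + i - 1) + i - 1 = B - A - 1 := by ring
  rw [heq] at h3
  have h4 : (P.card : ℤ) ≤ (B - 1) / i + 1 - (A + i - 1) / i := by
    calc (P.card : ℤ) ≤ ((((B - 1) / i + 1 - (A + i - 1) / i).toNat : ℕ) : ℤ) := by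
          exact_mod_cast hcard
      _ = _ := h2
  linarith

private lemma core_count (n i l m s : ℤ) (hn : 0 < n) (hi : 0 < i) (hl : 0 < l)
    (hln : l ≤ n) (hm : 0 < m) :
    (((Finset.Icc 1 m).filter (fun β => (β * i - s) % n < l)).card : ℤ)
      ≤ (m * i + n - 1) / n * (l / i + 1) := by
  set Q := (Finset.Icc 1 m).filter (fun β => (β * i - s) % n < l) with hQdef
  set K0 := (m * i + n - 1) / n with hK0def
  set k1 := (m * i - s) / n with hk1def
  have hK0pos : 1 ≤ K0 := by
    have h := Int.ediv_le_ediv hn (show n ≤ m * i + n - 1 by nlinarith)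
    rwa [Int.ediv_self (ne_of_gt hn)] at h
  have hK0n : m * i ≤ K0 * n := by
    have h1 := Int.mul_ediv_add_emod (m * i + n - 1) n
    have h2 := Int.emod_lt_of_pos (m * i + n - 1) hn
    nlinarith
  have hQmem : ∀ β ∈ Q, 1 ≤ β ∧ β ≤ m ∧ 0 ≤ (β * i - s) % n ∧ (β * i - s) % n < l := by
    intro β hβ
    rw [hQdef, Finset.mem_filter, Finset.mem_Icc] at hβ
    exact ⟨hβ.1.1, hβ.1.2, Int.emod_nonneg _ (ne_of_gt hn), hβ.2⟩
  have hl1 : (l - 1) / i + 1 ≤ l / i + 1 := by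
    have := Int.ediv_le_ediv hi (show l - 1 ≤ l by linarith); linarith
  have hmap : ∀ β ∈ Q, (β * i - s) / n ∈ Finset.Icc (k1 - K0) k1 := by
    intro β hβ
    obtain ⟨hβ1, hβm, hr0, hrl⟩ := hQmem β hβ
    rw [Finset.mem_Icc]
    constructor
    · have h := ediv_sub_ediv_le' (m * i - s) (β * i - s) n hn
      have hle : m * i - s - (β * i - s) + n - 1 ≤ m * i + n - 1 - i := by nlinarith
      have h2 := Int.ediv_le_ediv hn hle
      have h3 := Int.ediv_le_ediv hn (show m * i + n - 1 - i ≤ m * i + n - 1 by linarith)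
      linarith
    · exact Int.ediv_le_ediv hn (by nlinarith)
  have hfib := Finset.card_eq_sum_card_fiberwise hmap
  have hfiber_any : ∀ k : ℤ,
      ((Q.filter (fun β => (β * i - s) / n = k)).card : ℤ) ≤ (l - 1) / i + 1 := by
    intro k
    rcases (Q.filter (fun β => (β * i - s) / n = k)).eq_empty_or_nonempty with h | h
    · rw [h]
      simp only [Finset.card_empty, Nat.cast_zero]
      have : (0:ℤ) ≤ (l - 1) / i := Int.ediv_nonneg (by linarith) (le_of_lt hi)
      linarith
    · have hmemb : ∀ β ∈ Q.filter (fun β => (β * i - s) / n = k),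
          k * n + s ≤ β * i ∧ β * i < k * n + s + l := by
        intro β hβ
        rw [Finset.mem_filter] at hβ
        obtain ⟨h1, h2, h3, h4⟩ := hQmem β hβ.1
        have he := Int.mul_ediv_add_emod (β * i - s) n
        rw [hβ.2] at he
        constructor <;> linarith
      have hb := count_between i (k * n + s) (k * n + s + l) hi _ hmemb h
      have heq : k * n + s + l - (k * n + s) - 1 = l - 1 := by ring
      rwa [heq] at hb
  have hQlo_hi : ((Q.filter (fun β => (β * i - s) / n = k1 - K0)).card : ℤ)
      + ((Q.filter (fun β => (β * i - s) / n = k1)).card : ℤ) ≤ l / i + 1 := by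
    rcases (Q.filter (fun β => (β * i - s) / n = k1 - K0)).eq_empty_or_nonempty with hlo | hlo
    · rw [hlo]
      simpa using le_trans (hfiber_any k1) hl1
    rcases (Q.filter (fun β => (β * i - s) / n = k1)).eq_empty_or_nonempty with hhi | hhi
    · rw [hhi]
      simpa using le_trans (hfiber_any (k1 - K0)) hl1
    have hbl : ((Q.filter (fun β => (β * i - s) / n = k1 - K0)).card : ℤ)
        ≤ ((k1 - K0) * n + s + l - i - 1) / i + 1 := by
      have hmemb : ∀ β ∈ Q.filter (fun β => (β * i - s) / n = k1 - K0),
          i ≤ β * i ∧ β * i < (k1 - K0) * n + s + l := by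
        intro β hβ
        rw [Finset.mem_filter] at hβ
        obtain ⟨h1, h2, h3, h4⟩ := hQmem β hβ.1
        have he := Int.mul_ediv_add_emod (β * i - s) n
        rw [hβ.2] at he
        constructor
        · nlinarith
        · nlinarith
      have hb := count_between i i ((k1 - K0) * n + s + l) hi _ hmemb hlo
      have heq : (k1 - K0) * n + s + l - i - 1 = (k1 - K0) * n + s + l - i - 1 := rfl
      linarith [hb]
    have hbh : ((Q.filter (fun β => (β * i - s) / n = k1)).card : ℤ)
        ≤ (m * i + 1 - (k1 * n + s) - 1) / i + 1 := by
      have hmemb : ∀ β ∈ Q.filter (fun β => (β * i - s) / n = k1),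
          k1 * n + s ≤ β * i ∧ β * i < m * i + 1 := by
        intro β hβ
        rw [Finset.mem_filter] at hβ
        obtain ⟨h1, h2, h3, h4⟩ := hQmem β hβ.1
        have he := Int.mul_ediv_add_emod (β * i - s) n
        constructor
        · rw [hβ.2] at he
          linarith
        · nlinarith
      exact count_between i (k1 * n + s) (m * i + 1) hi _ hmemb hhi
    have hsum := ediv_add_ediv_le' ((k1 - K0) * n + s + l - i - 1)
      (m * i + 1 - (k1 * n + s) - 1) i hi
    have hle2 : (k1 - K0) * n + s + l - i - 1 + (m * i + 1 - (k1 * n + s) - 1)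
        ≤ l - 1 + (-1) * i := by nlinarith
    have hmono := Int.ediv_le_ediv hi hle2
    have hsub2 : (l - 1 + (-1) * i) / i = (l - 1) / i + (-1) :=
      Int.add_mul_ediv_right _ _ (ne_of_gt hi)
    linarith
  -- decompose the index set
  have hklt : k1 - K0 < k1 := by linarith
  have hicc : insert (k1 - K0) (insert k1 (Finset.Ioo (k1 - K0) k1))
      = Finset.Icc (k1 - K0) k1 := by
    rw [Finset.Ioo_insert_right hklt, Finset.Ioc_insert_left hklt.le]
  have hni2 : k1 ∉ Finset.Ioo (k1 - K0) k1 := by simp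
  have hni1 : (k1 - K0) ∉ insert k1 (Finset.Ioo (k1 - K0) k1) := by
    simp only [Finset.mem_insert, Finset.mem_Ioo]
    push_neg
    exact ⟨by linarith, fun h => absurd h (lt_irrefl _)⟩
  have hdecomp : (Q.card : ℤ)
      = ((Q.filter (fun β => (β * i - s) / n = k1 - K0)).card : ℤ)
      + ((Q.filter (fun β => (β * i - s) / n = k1)).card : ℤ)
      + ∑ k ∈ Finset.Ioo (k1 - K0) k1, ((Q.filter (fun β => (β * i - s) / n = k)).card : ℤ) := by
    rw [hfib, ← hicc, Finset.sum_insert hni1, Finset.sum_insert hni2]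
    push_cast
    ring
  have hIoo : ∑ k ∈ Finset.Ioo (k1 - K0) k1,
      ((Q.filter (fun β => (β * i - s) / n = k)).card : ℤ) ≤ (K0 - 1) * (l / i + 1) := by
    have hb : ∀ k ∈ Finset.Ioo (k1 - K0) k1,
        ((Q.filter (fun β => (β * i - s) / n = k)).card : ℤ) ≤ l / i + 1 :=
      fun k _ => le_trans (hfiber_any k) hl1
    have h := Finset.sum_le_card_nsmul _ _ _ hb
    rw [nsmul_eq_mul] at h
    have hc : ((Finset.Ioo (k1 - K0) k1).card : ℤ) = K0 - 1 := by
      rw [Int.card_Ioo]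
      rw [Int.toNat_of_nonneg (by linarith)]
      ring
    rw [hc] at h
    exact h
  have hz : (0:ℤ) ≤ l / i + 1 := by
    have : (0:ℤ) ≤ l / i := Int.ediv_nonneg (le_of_lt hl) (le_of_lt hi)
    linarith
  calc (Q.card : ℤ) = _ := hdecomp
    _ ≤ (l / i + 1) + (K0 - 1) * (l / i + 1) := by linarith
    _ = K0 * (l / i + 1) := by ring

/-- for β uniform over t consecutive integers T ⊆ [m], and S an interval of
l consecutive residues mod n, Pr[β·i mod n ∈ S] ≤ ⌈im/n⌉(1 + ⌊l/i⌋)/t. -/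
theorem unif_dilate_interval (n m t l i : ℕ) (hn : 0 < n) (hm : 0 < m) (ht : 0 < t)
    (hl : 0 < l) (hi : 1 ≤ i) (hin : i ≤ n)
    (a : ℕ) (T : Finset ℕ) (hT : T = Finset.Ico a (a + t))
    (hTm : T ⊆ Finset.Icc 1 m)
    (s : ℕ) (S : Finset ℕ) (hS : S = (Finset.Ico s (s + l)).image (· % n)) :
    ((T.filter (fun β => (β * i) % n ∈ S)).card : ℝ) / t
      ≤ (⌈((i : ℝ) * m) / n⌉ * (1 + (l / i : ℕ))) / t := by
  have htR : (0:ℝ) < t := by exact_mod_cast ht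
  have hnR : (0:ℝ) < n := by exact_mod_cast hn
  have hiR : (0:ℝ) < i := by exact_mod_cast hi
  have hkey : ((T.filter (fun β => (β * i) % n ∈ S)).card : ℝ)
      ≤ ⌈((i : ℝ) * m) / n⌉ * (1 + (l / i : ℕ)) := by
    by_cases hcase : n ≤ l
    · -- S covers everything often; crude bound via card ≤ t ≤ m
        subst hT
        have htm : t ≤ m := by
          have h := Finset.card_le_card hTm
          rw [Nat.card_Ico, Nat.card_Icc] at h
          omega
        have hcard : ((Finset.Ico a (a + t)).filter (fun β => (β * i) % n ∈ S)).card ≤ t := by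
          have h := Finset.card_le_card (Finset.filter_subset (fun β => (β * i) % n ∈ S) (Finset.Ico a (a + t)))
          rwa [Nat.card_Ico, Nat.add_sub_cancel_left] at h
        have h1 : ((i : ℝ) * m) / n ≤ ⌈((i : ℝ) * m) / n⌉ := Int.le_ceil _
        have h2 : (n:ℝ) / i ≤ 1 + ((l / i : ℕ) : ℝ) := by
          have h5 : n / i ≤ l / i := Nat.div_le_div_right hcase
          have h6 : i * (n / i) ≤ i * (l / i) := Nat.mul_le_mul_left _ h5
          have h3 := Nat.div_add_mod n i
          have h4 : n % i < i := Nat.mod_lt _ hi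
          have h7 : i * (1 + l / i) = i + i * (l / i) := by ring
          have hnat : n ≤ i * (1 + l / i) := by omega
          rw [div_le_iff₀ hiR]
          have : (n : ℝ) ≤ (i : ℝ) * (1 + (l / i : ℕ)) := by exact_mod_cast hnat
          linarith
        have hceil : (0:ℝ) ≤ ⌈((i : ℝ) * m) / n⌉ := le_trans (by positivity) h1
        calc (((Finset.Ico a (a+t)).filter (fun β => (β * i) % n ∈ S)).card : ℝ)
            ≤ (m : ℝ) := by exact_mod_cast le_trans hcard htm
          _ = (((i : ℝ) * m) / n) * ((n : ℝ) / i) := by field_simp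
          _ ≤ ⌈((i : ℝ) * m) / n⌉ * (1 + ((l / i : ℕ) : ℝ)) := by
              apply mul_le_mul h1 h2 (by positivity) hceil
    · push_neg at hcase
      subst hS
      -- transfer the count to ℤ
      have hinj : (T.filter (fun β => (β * i) % n ∈ (Finset.Ico s (s + l)).image (· % n))).card
          ≤ ((Finset.Icc (1:ℤ) (m:ℤ)).filter (fun β => (β * (i:ℤ) - (s:ℤ)) % (n:ℤ) < (l:ℤ))).card := by
        apply Finset.card_le_card_of_injOn (fun β : ℕ => (β : ℤ))
        · intro β hβ
          rw [Finset.mem_coe, Finset.mem_filter] at hβ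
          obtain ⟨hβT, hβP⟩ := hβ
          have hβm := hTm hβT
          rw [Finset.mem_Icc] at hβm
          beta_reduce
          rw [Finset.mem_coe, Finset.mem_filter, Finset.mem_Icc]
          refine ⟨⟨by exact_mod_cast hβm.1, by exact_mod_cast hβm.2⟩, ?_⟩
          rw [Finset.mem_image] at hβP
          obtain ⟨y, hy, hymod⟩ := hβP
          rw [Finset.mem_Ico] at hy
          have hcast : (y : ℤ) % n = ((β : ℤ) * i) % n := by
            have : ((y % n : ℕ) : ℤ) = ((β * i % n : ℕ) : ℤ) := by exact_mod_cast hymod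
            push_cast at this
            exact this
          have hmodeq : ((β : ℤ) * i - s) % n = ((y : ℤ) - s) % n := by
            have h1 : ((β : ℤ) * i) % n = (y : ℤ) % n := hcast.symm
            have h2 : Int.ModEq n ((β : ℤ) * i) (y : ℤ) := h1
            exact (Int.ModEq.sub_right (s : ℤ) h2).symm ▸ rfl
          rw [hmodeq]
          have hyz : ((y : ℤ) - s) % n = (y : ℤ) - s := by
            apply Int.emod_eq_of_lt
            · have hsy : (s : ℤ) ≤ y := by exact_mod_cast hy.1
              linarith
            · have hln : (l : ℤ) < n := by exact_mod_cast hcase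
              have hyl : (y : ℤ) < s + l := by exact_mod_cast hy.2
              linarith
          rw [hyz]
          have : (y : ℤ) < s + l := by exact_mod_cast hy.2
          linarith
        · intro x _ y _ hxy
          simpa using hxy
      have hcore := core_count (n : ℤ) (i : ℤ) (l : ℤ) (m : ℤ) (s : ℤ)
        (by exact_mod_cast hn) (by exact_mod_cast hi) (by exact_mod_cast hl)
        (by exact_mod_cast hcase.le) (by exact_mod_cast hm)
      have htotal : ((T.filter (fun β => (β * i) % n ∈ (Finset.Ico s (s + l)).image (· % n))).card : ℤ)
          ≤ ((m : ℤ) * i + n - 1) / n * ((l : ℤ) / i + 1) := le_trans (by exact_mod_cast hinj) hcore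
      -- now to ℝ
      set K0 : ℤ := ((m : ℤ) * i + n - 1) / n with hK0
      have hnz : (n : ℤ) ≠ 0 := by exact_mod_cast hn.ne'
      have hK0ceil : K0 ≤ ⌈((i : ℝ) * m) / n⌉ := by
        have hK1 : K0 - 1 = ((m : ℤ) * i - 1) / n := by
          rw [hK0, show (m : ℤ) * i + n - 1 = (m : ℤ) * i - 1 + 1 * n by ring,
            Int.add_mul_ediv_right _ _ hnz]
          ring
        have hlt : (K0 - 1) * n < (m : ℤ) * i := by
          rw [hK1]
          have h := Int.ediv_mul_le ((m : ℤ) * i - 1) hnz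
          nlinarith [h]
        have : ((K0 - 1 : ℤ) : ℝ) < ((i : ℝ) * m) / n := by
          rw [lt_div_iff₀ hnR]
          have hltR : ((K0 : ℝ) - 1) * n < (m : ℝ) * i := by exact_mod_cast hlt
          push_cast
          nlinarith [hltR]
        have := Int.lt_ceil.mpr this
        omega
      have hK0nonneg : (0 : ℤ) ≤ K0 := by
        apply Int.ediv_nonneg _ (by exact_mod_cast hn.le)
        have h1 : (1:ℤ) ≤ m := by exact_mod_cast hm
        have h2 : (1:ℤ) ≤ i := by exact_mod_cast hi
        have h3 : (1:ℤ) ≤ n := by exact_mod_cast hn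
        nlinarith
      have hfac : ((l : ℤ) / i + 1 : ℤ) = ((l / i : ℕ) : ℤ) + 1 := by push_cast; ring
      have hZ : ((T.filter (fun β => (β * i) % n ∈ (Finset.Ico s (s + l)).image (· % n))).card : ℤ)
          ≤ ⌈((i : ℝ) * m) / n⌉ * (((l / i : ℕ) : ℤ) + 1) := by
        calc ((T.filter (fun β => (β * i) % n ∈ (Finset.Ico s (s + l)).image (· % n))).card : ℤ)
            ≤ K0 * ((l : ℤ) / i + 1) := htotal
          _ = K0 * (((l / i : ℕ) : ℤ) + 1) := by rw [hfac]
          _ ≤ ⌈((i : ℝ) * m) / n⌉ * (((l / i : ℕ) : ℤ) + 1) :=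
              mul_le_mul_of_nonneg_right hK0ceil (by positivity)
      obtain ⟨N, hN⟩ : ∃ N, l / i = N := ⟨_, rfl⟩
      rw [hN] at hZ ⊢
      have hZR : ((((T.filter (fun β => (β * i) % n ∈ (Finset.Ico s (s + l)).image (· % n))).card : ℤ)) : ℝ)
          ≤ ((⌈((i : ℝ) * m) / n⌉ * ((N : ℤ) + 1) : ℤ) : ℝ) := by exact_mod_cast hZ
      push_cast at hZR ⊢
      linarith
  gcongr
end

section
/- Let f : ℝ → ℂ be a Schwartz function with continuous Fourier transform f̂(s) = ∫ e^{-2πist} f(t) dt. For a positive integer n, define g ∈ ℂ^n by g_t = √n · Σ_{j∈ℤ} f(t + nj) and g' ∈ ℂ^n by g'_t = Σ_{j∈ℤ} f̂(t/n + j). Then the n-dimensional DFT of g (with normalization ĝ_s = (1/√n) Σ_{t∈[n]} e^{-2πist/n} g_t) equals g'. -/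
set_option maxHeartbeats 1000000

open Finset Complex MeasureTheory

/-- discrete Poisson summation: the DFT of the periodization of a
Schwartz function equals the periodization of its continuous Fourier transform. -/
theorem poisson_summation_dft (n : ℕ) [NeZero n] (f : SchwartzMap ℝ ℂ)
    (g g' : Fin n → ℂ)
    (hg : ∀ t : Fin n, g t = Real.sqrt n * ∑' j : ℤ, f ((t : ℝ) + n * j))
    (hg' : ∀ t : Fin n, g' t = ∑' j : ℤ, FourierTransform.fourier (⇑f : ℝ → ℂ) ((t : ℝ) / n + j))
    (s : Fin n) :
    (1 / Real.sqrt n) *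
        ∑ t : Fin n, Complex.exp (-2 * Real.pi * Complex.I * s * t / n) * g t
      = g' s := by
  have hn0 : 0 < n := Nat.pos_of_ne_zero (NeZero.ne n)
  have hn : (n : ℝ) ≠ 0 := Nat.cast_ne_zero.mpr (NeZero.ne n)
  have hnc : (n : ℂ) ≠ 0 := Nat.cast_ne_zero.mpr (NeZero.ne n)
  have hsq : (Real.sqrt n : ℂ) ≠ 0 := by
    simp only [ne_eq, Complex.ofReal_eq_zero]
    positivity
  set c : ℤ → ℂ := fun m => Complex.exp (-2 * Real.pi * Complex.I * s * m / n) * f m with hcdef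
  -- summability of c
  have hfs : Summable (fun m : ℤ => f (m : ℝ)) :=
    summable_of_isBigO (Real.summable_abs_int_rpow one_lt_two)
      ((f.isBigO_cocompact_rpow (-2)).comp_tendsto Int.tendsto_coe_cofinite)
  have hnorm : ∀ m : ℤ, ‖c m‖ = ‖f (m : ℝ)‖ := by
    intro m
    have h1 : (-2 * (Real.pi : ℂ) * Complex.I * s * m / n)
        = ((-2 * Real.pi * s * m / n : ℝ) : ℂ) * Complex.I := by
      push_cast; ring
    simp only [hcdef, norm_mul, h1]
    rw [Complex.norm_exp_ofReal_mul_I, one_mul]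
  have hcn : Summable (fun m : ℤ => ‖c m‖) := by
    simpa only [hnorm] using summable_norm_iff.mpr hfs
  have hcs : Summable c := hcn.of_norm
  -- the key pointwise identity
  have hkey : ∀ (t : Fin n) (j : ℤ),
      c (j * n + t) = Complex.exp (-2 * Real.pi * Complex.I * s * t / n) * f ((t : ℝ) + n * j) := by
    intro t j
    have harg : ((j * (n:ℤ) + (t:ℤ) : ℤ) : ℝ) = (t : ℝ) + n * j := by push_cast; ring
    have hexp : (-2 * (Real.pi:ℂ) * Complex.I * s * ((j * (n:ℤ) + (t:ℤ) : ℤ) : ℂ) / n)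
        = (-2 * Real.pi * Complex.I * s * t / n) + ((-(s * j) : ℤ) * (2 * Real.pi * Complex.I)) := by
      push_cast
      field_simp
      ring
    simp only [hcdef]
    rw [harg, hexp, Complex.exp_add, Complex.exp_int_mul_two_pi_mul_I, mul_one]
  -- Step A : LHS = ∑' m, c m
  have stepA : (1 / (Real.sqrt n : ℂ)) *
      ∑ t : Fin n, Complex.exp (-2 * Real.pi * Complex.I * s * t / n) * g t = ∑' m : ℤ, c m := by
    have h1 : ∀ t : Fin n, Complex.exp (-2 * Real.pi * Complex.I * s * t / n) * g t
        = (Real.sqrt n : ℂ) * ∑' j : ℤ, c (j * n + t) := by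
      intro t
      have h2 : ∑' j : ℤ, c (j * n + t)
          = Complex.exp (-2 * Real.pi * Complex.I * s * t / n) * ∑' j : ℤ, f ((t : ℝ) + n * j) := by
        rw [← tsum_mul_left]
        exact tsum_congr fun j => hkey t j
      rw [hg t, h2]
      ring
    simp only [h1]
    rw [← Finset.mul_sum, ← mul_assoc, one_div, inv_mul_cancel₀ hsq, one_mul]
    -- now ∑ t, ∑' j, c (j*n+t) = ∑' m, c m
    have hF : Summable (fun p : ℤ × Fin n => c (p.1 * n + p.2)) :=
      (Int.divModEquiv n).symm.summable_iff.mpr hcs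
    have hG : Summable (fun q : Fin n × ℤ => c (q.2 * n + q.1)) :=
      ((Equiv.prodComm ℤ (Fin n)).summable_iff
        (f := fun q : Fin n × ℤ => c (q.2 * n + q.1))).mp hF
    have e1 : ∑' p : ℤ × Fin n, c (p.1 * n + p.2) = ∑' m : ℤ, c m :=
      (Int.divModEquiv n).symm.tsum_eq c
    have e2 : ∑' q : Fin n × ℤ, c (q.2 * n + q.1) = ∑' p : ℤ × Fin n, c (p.1 * n + p.2) :=
      ((Equiv.prodComm ℤ (Fin n)).tsum_eq (fun q : Fin n × ℤ => c (q.2 * n + q.1))).symm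
    rw [← e1, ← e2, hG.tsum_prod, tsum_fintype]
  -- Step B : ∑' m, c m = g' s
  have hFF : ∀ x : ℝ, SchwartzMap.fourierTransformCLM ℝ (SchwartzMap.fourierTransformCLM ℝ f) x
      = f (-x) := by
    intro x
    have h1 : (SchwartzMap.fourierTransformCLM ℝ (SchwartzMap.fourierTransformCLM ℝ f)) x
        = FourierTransform.fourier (FourierTransform.fourier ⇑f) x := rfl
    have h2 := Real.fourierInv_eq_fourier_neg (FourierTransform.fourier ⇑f) (-x)
    rw [neg_neg] at h2
    rw [h1, ← h2, Continuous.fourierInv_fourier_eq f.continuous f.integrable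
        (SchwartzMap.fourierTransformCLM ℝ f).integrable]
  have key : ∀ m : ℤ, SchwartzMap.fourierTransformCLM ℝ (SchwartzMap.fourierTransformCLM ℝ f) m
      * fourier m ((((s : ℝ) / n : ℝ)) : UnitAddCircle) = c (-m) := by
    intro m
    rw [hFF, fourier_coe_apply]
    simp only [hcdef]
    rw [mul_comm]
    congr 1
    · congr 1
      push_cast
      field_simp
    · congr 1
      push_cast
      ring
  have stepB : (∑' m : ℤ, c m) = g' s := by
    rw [hg' s]
    calc ∑' m : ℤ, c m = ∑' m : ℤ, c (-m) := ((Equiv.neg ℤ).tsum_eq c).symm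
      _ = ∑' m : ℤ, SchwartzMap.fourierTransformCLM ℝ (SchwartzMap.fourierTransformCLM ℝ f) m
            * fourier m ((((s : ℝ) / n : ℝ)) : UnitAddCircle) :=
          tsum_congr fun m => (key m).symm
      _ = ∑' j : ℤ, (SchwartzMap.fourierTransformCLM ℝ f) ((s : ℝ) / n + j) :=
          ((SchwartzMap.fourierTransformCLM ℝ f).tsum_eq_tsum_fourier ((s : ℝ) / n)).symm
      _ = ∑' j : ℤ, FourierTransform.fourier (⇑f) ((s : ℝ) / n + j) := rfl
  exact stepA.trans stepB
end
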